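/- arXiv:1709.00207 — 3 statements merged into one kernel-verified Lean document; each statement's English description precedes it below -/
import Mathlib

section
/- Feldheim's identity: for all nonnegative integers k and l, H_k(x)·H_l(x) = k!·l!·∑_{m=0}^{min(k,l)} 2^m/(m!·(k−m)!·(l−m)!)·H_{k+l−2m}(x) for every real x. -/
open Real MeasureTheory

/-- The physicists' Hermite polynomials: `H 0 = 1`, `H (k+1) = 2·X·H k − (H k)'`. -/
noncomputable def hermiteP : ℕ → Polynomial ℝ
  | 0 => 1
  | n + 1 => 2 * (Polynomial.X * hermiteP n) - Polynomial.derivative (hermiteP n)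

/-- The k-th physicists' Hermite polynomial as a function on ℝ. -/
noncomputable def H (k : ℕ) (x : ℝ) : ℝ := (hermiteP k).eval x

/-- The normalization constants `α k = (2^k · k! · √π)^{-1/2}`. -/
noncomputable def α (k : ℕ) : ℝ :=
  ((2 : ℝ) ^ k * (Nat.factorial k : ℝ) * Real.sqrt π) ^ (-(1 / 2 : ℝ))

/-- The normalized Hermite functions `h k x = α k · H k x · e^{-x²/2}`. -/
noncomputable def h (k : ℕ) (x : ℝ) : ℝ := α k * H k x * Real.exp (-x ^ 2 / 2)

open Polynomial in
lemma derivP : ∀ n, Polynomial.derivative (hermiteP n) = Polynomial.C (2*(n:ℝ)) * hermiteP (n-1) := by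
  intro n
  induction n using Nat.strong_induction_on with
  | _ n ih =>
    match n with
    | 0 => simp [hermiteP]
    | 1 => simp [hermiteP, map_ofNat]
    | (i+2) =>
      have h1 := ih (i+1) (by omega)
      have h0 := ih i (by omega)
      rw [Nat.add_sub_cancel] at h1
      show Polynomial.derivative (2 * (X * hermiteP (i+1)) - Polynomial.derivative (hermiteP (i+1))) =
        Polynomial.C (2*((i+2:ℕ):ℝ)) * hermiteP (i+1)
      rw [h1]
      simp only [derivative_sub, derivative_mul, derivative_ofNat, derivative_X, derivative_C,
        h1, h0]
      have e1 : hermiteP (i+1) = 2 * (X * hermiteP i) - Polynomial.C (2*(i:ℝ)) * hermiteP (i-1) := by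
        show 2 * (X * hermiteP i) - Polynomial.derivative (hermiteP i) = _
        rw [h0]
      rw [e1]
      simp only [Nat.cast_add, Nat.cast_one, Nat.cast_ofNat, map_add, map_mul, map_ofNat, map_one,
        Polynomial.C_eq_natCast]
      ring

lemma H_rec (n : ℕ) (x : ℝ) : H (n+1) x = 2*x*H n x - 2*(n:ℝ)*H (n-1) x := by
  show (2 * (Polynomial.X * hermiteP n) - Polynomial.derivative (hermiteP n)).eval x = _
  rw [derivP]
  simp [H]
  ring

lemma two_mul_H (n : ℕ) (x : ℝ) : 2*x*H n x = H (n+1) x + 2*(n:ℝ)*H (n-1) x := by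
  rw [H_rec]; ring

noncomputable def a (k l m : ℕ) : ℝ :=
  2^m * (Nat.factorial m : ℝ) * (Nat.choose k m : ℝ) * (Nat.choose l m : ℝ)

lemma a_zero_left {k l m : ℕ} (h : k < m) : a k l m = 0 := by
  simp [a, Nat.choose_eq_zero_of_lt h]

lemma a_zero_right {k l m : ℕ} (h : l < m) : a k l m = 0 := by
  simp [a, Nat.choose_eq_zero_of_lt h]

lemma a_rec (k l j : ℕ) :
    a (k+1) l (j+1) = a k l (j+1) + 2*((k+l-2*j : ℕ):ℝ) * a k l j - 2*(k:ℝ) * a (k-1) l j := by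
  by_cases hjk : j ≤ k
  · by_cases hjl : j ≤ l
    · rcases Nat.eq_zero_or_pos k with hk | hk
      · subst hk
        interval_cases j
        simp [a, Nat.choose]
      have hk0 : (k:ℝ) ≠ 0 := by positivity
      have hj1 : ((j:ℝ)+1) ≠ 0 := by positivity
      have f1 : ((j:ℝ)+1) * (Nat.choose (k+1) (j+1) : ℝ) = ((k:ℝ)+1) * (Nat.choose k j : ℝ) := by
        have h : ((k+1) * Nat.choose k j : ℕ) = (Nat.choose (k+1) (j+1) * (j+1) : ℕ) :=
          Nat.add_one_mul_choose_eq k j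
        have := congrArg (Nat.cast (R := ℝ)) h
        push_cast at this
        linarith
      have f2 : ((j:ℝ)+1) * (Nat.choose l (j+1) : ℝ) = ((l:ℝ)-(j:ℝ)) * (Nat.choose l j : ℝ) := by
        have := congrArg (Nat.cast (R := ℝ)) (Nat.choose_succ_right_eq l j)
        push_cast [Nat.cast_sub hjl] at this
        linarith
      have f3 : ((j:ℝ)+1) * (Nat.choose k (j+1) : ℝ) = ((k:ℝ)-(j:ℝ)) * (Nat.choose k j : ℝ) := by
        have := congrArg (Nat.cast (R := ℝ)) (Nat.choose_succ_right_eq k j)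
        push_cast [Nat.cast_sub hjk] at this
        linarith
      have f4 : (k:ℝ) * (Nat.choose (k-1) j : ℝ) = ((k:ℝ)-(j:ℝ)) * (Nat.choose k j : ℝ) := by
        obtain ⟨p, rfl⟩ := Nat.exists_eq_succ_of_ne_zero (Nat.pos_iff_ne_zero.mp hk)
        simp only [Nat.succ_sub_one]
        have c1 := congrArg (Nat.cast (R := ℝ)) (Nat.add_one_mul_choose_eq p j)
        have c2 := congrArg (Nat.cast (R := ℝ)) (Nat.choose_succ_right_eq (p+1) j)
        have hjp : j ≤ p + 1 := hjk
        push_cast [Nat.cast_sub hjp] at c1 c2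
        push_cast
        nlinarith [c1, c2]
      have e1 : (Nat.choose (k+1) (j+1) : ℝ) = ((k:ℝ)+1) * (Nat.choose k j : ℝ) / ((j:ℝ)+1) := by
        field_simp; linarith [f1]
      have e2 : (Nat.choose l (j+1) : ℝ) = ((l:ℝ)-(j:ℝ)) * (Nat.choose l j : ℝ) / ((j:ℝ)+1) := by
        field_simp; linarith [f2]
      have e3 : (Nat.choose k (j+1) : ℝ) = ((k:ℝ)-(j:ℝ)) * (Nat.choose k j : ℝ) / ((j:ℝ)+1) := by
        field_simp; linarith [f3]
      have e4 : (Nat.choose (k-1) j : ℝ) = ((k:ℝ)-(j:ℝ)) * (Nat.choose k j : ℝ) / (k:ℝ) := by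
        field_simp; linarith [f4]
      have hcast : ((k+l-2*j : ℕ):ℝ) = (k:ℝ) + (l:ℝ) - 2*(j:ℝ) := by
        have h2 : 2*j ≤ k + l := by omega
        push_cast [Nat.cast_sub h2]; ring
      simp only [a, hcast, e1, e2, e3, e4, Nat.factorial_succ]
      push_cast
      field_simp
      ring
    · push_neg at hjl
      simp [a, Nat.choose_eq_zero_of_lt hjl, Nat.choose_eq_zero_of_lt (by omega : l < j+1)]
  · push_neg at hjk
    simp [a, Nat.choose_eq_zero_of_lt hjk, Nat.choose_eq_zero_of_lt (by omega : k < j+1),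
      Nat.choose_eq_zero_of_lt (by omega : k+1 < j+1), Nat.choose_eq_zero_of_lt (by omega : k-1 < j)]

lemma key (l : ℕ) (x : ℝ) : ∀ k, H k x * H l x =
    ∑ m ∈ Finset.range (k+1), a k l m * H (k+l-2*m) x := by
  intro k
  induction k using Nat.strong_induction_on with
  | _ K ih =>
    match K with
    | 0 => simp [H, hermiteP, a]
    | (K+1) =>
      set S1 : ℝ := ∑ j ∈ Finset.range (K+1), a K l (j+1) * H ((K+l-1)-2*j) x with hS1
      set S2 : ℝ := ∑ j ∈ Finset.range (K+1),
        2*((K+l-2*j:ℕ):ℝ) * a K l j * H ((K+l-1)-2*j) x with hS2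
      set S3 : ℝ := ∑ j ∈ Finset.range (K+1),
        2*(K:ℝ) * a (K-1) l j * H ((K+l-1)-2*j) x with hS3
      have hR : ∑ m ∈ Finset.range (K+1+1), a (K+1) l m * H (K+1+l-2*m) x
          = S1 + S2 - S3 + H (K+1+l) x := by
        rw [Finset.sum_range_succ']
        have hterm : ∀ j ∈ Finset.range (K+1),
            a (K+1) l (j+1) * H (K+1+l-2*(j+1)) x =
            a K l (j+1) * H ((K+l-1)-2*j) x
              + 2*((K+l-2*j:ℕ):ℝ) * a K l j * H ((K+l-1)-2*j) x
              - 2*(K:ℝ) * a (K-1) l j * H ((K+l-1)-2*j) x := by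
          intro j _
          have hidx : K+1+l-2*(j+1) = (K+l-1)-2*j := by omega
          rw [hidx, a_rec]
          ring
        rw [Finset.sum_congr rfl hterm]
        rw [Finset.sum_sub_distrib, Finset.sum_add_distrib]
        have h0 : a (K+1) l 0 * H (K+1+l-2*0) x = H (K+1+l) x := by
          simp [a]
        rw [h0]
      rw [hR]
      have hL1 : H (K+1) x * H l x = 2*x*(H K x * H l x) - 2*(K:ℝ)*(H (K-1) x * H l x) := by
        rw [H_rec]; ring
      rw [hL1, ih K (by omega)]
      have hA : 2*x*(∑ m ∈ Finset.range (K+1), a K l m * H (K+l-2*m) x)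
          = S1 + H (K+1+l) x + S2 := by
        rw [Finset.mul_sum]
        have hterm : ∀ m ∈ Finset.range (K+1),
            2*x*(a K l m * H (K+l-2*m) x) =
            a K l m * H ((K+l-2*m)+1) x
              + 2*((K+l-2*m:ℕ):ℝ) * a K l m * H ((K+l-2*m)-1) x := by
          intro m _
          have h2 : 2*x*(a K l m * H (K+l-2*m) x) = a K l m * (2*x*H (K+l-2*m) x) := by ring
          rw [h2, two_mul_H]
          ring
        rw [Finset.sum_congr rfl hterm, Finset.sum_add_distrib]
        have e1 : (∑ m ∈ Finset.range (K+1), a K l m * H ((K+l-2*m)+1) x)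
            = S1 + H (K+1+l) x := by
          have hlast : a K l (K+1) * H ((K+l-1)-2*K) x = 0 := by
            rw [a_zero_left (by omega)]; ring
          rw [Finset.sum_range_succ', hS1, Finset.sum_range_succ, hlast, add_zero]
          congr 1
          · apply Finset.sum_congr rfl
            intro j _
            by_cases hc : 2*(j+1) ≤ K+l
            · have hidx : (K+l-2*(j+1))+1 = (K+l-1)-2*j := by omega
              rw [hidx]
            · have hd : K < j+1 ∨ l < j+1 := by omega
              rcases hd with h | h
              · rw [a_zero_left h]; ring
              · rw [a_zero_right h]; ring
          · have hidx : (K+l-2*0)+1 = K+1+l := by omega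
            rw [hidx]
            simp [a]
        have e2 : (∑ m ∈ Finset.range (K+1),
            2*((K+l-2*m:ℕ):ℝ) * a K l m * H ((K+l-2*m)-1) x) = S2 := by
          rw [hS2]
          apply Finset.sum_congr rfl
          intro j _
          have hidx : (K+l-2*j)-1 = (K+l-1)-2*j := by omega
          rw [hidx]
        rw [e1, e2]
      rw [hA]
      have hC : 2*(K:ℝ)*(H (K-1) x * H l x) = S3 := by
        match K with
        | 0 => simp [hS3]
        | (J+1) =>
          rw [show ((J+1:ℕ)-1 : ℕ) = J from rfl, ih J (by omega), Finset.mul_sum, hS3]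
          conv_rhs => rw [Finset.sum_range_succ]
          have hz : 2*((J+1:ℕ):ℝ) * a ((J+1:ℕ)-1) l (J+1) * H ((J+1+l-1)-2*(J+1)) x = 0 := by
            rw [show ((J+1:ℕ)-1:ℕ) = J from rfl, a_zero_left (by omega : J < J+1)]
            ring
          rw [hz, add_zero]
          apply Finset.sum_congr rfl
          intro j _
          have hidx : J+l-2*j = (J+1+l-1)-2*j := by omega
          rw [show ((J+1:ℕ)-1:ℕ) = J from rfl, ← hidx]
          push_cast
          ring
      rw [hC]
      ring

theorem stmt_3 (k l : ℕ) (x : ℝ) :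
    H k x * H l x =
      (Nat.factorial k : ℝ) * (Nat.factorial l : ℝ) *
        ∑ m ∈ Finset.range (min k l + 1),
          (2 : ℝ) ^ m /
              ((Nat.factorial m : ℝ) * (Nat.factorial (k - m) : ℝ) *
                (Nat.factorial (l - m) : ℝ)) *
            H (k + l - 2 * m) x := by
  rw [key, Finset.mul_sum]
  rw [← Finset.sum_subset (Finset.range_subset_range.mpr (by omega : min k l + 1 ≤ k + 1))
    (fun m _ hm => ?_)]
  · apply Finset.sum_congr rfl
    intro m hm
    have hm' := Finset.mem_range.mp hm
    have hmk : m ≤ k := by omega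
    have hml : m ≤ l := by omega
    have ck : (Nat.choose k m * Nat.factorial m * Nat.factorial (k-m) : ℕ) = Nat.factorial k :=
      Nat.choose_mul_factorial_mul_factorial hmk
    have cl : (Nat.choose l m * Nat.factorial m * Nat.factorial (l-m) : ℕ) = Nat.factorial l :=
      Nat.choose_mul_factorial_mul_factorial hml
    have ckr := congrArg (Nat.cast (R := ℝ)) ck
    have clr := congrArg (Nat.cast (R := ℝ)) cl
    push_cast at ckr clr
    rw [a, ← ckr, ← clr]
    have h1 : (Nat.factorial m : ℝ) ≠ 0 := by positivity
    have h2 : (Nat.factorial (k-m) : ℝ) ≠ 0 := by positivity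
    have h3 : (Nat.factorial (l-m) : ℝ) ≠ 0 := by positivity
    field_simp
  · -- m in range (k+1) but not in range (min k l + 1): a k l m = 0
    have h1 : min k l + 1 ≤ m := by
      by_contra hc
      exact hm (Finset.mem_range.mpr (by omega))
    have : k < m ∨ l < m := by omega
    rcases this with h | h
    · rw [a_zero_left h]; ring
    · rw [a_zero_right h]; ring
end

section
/- The product of two normalized Hermite functions satisfies h_k(x)·h_l(x) = e^{-x²/2}·∑_{m=0}^{min(k,l)} β_{k,l,m}·h_{k+l−2m}(x), where β_{k,l,m} = π^{-1/4}·(k!·l!·(k+l−2m)!)^{1/2}/(m!·(k−m)!·(l−m)!). -/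
open Real MeasureTheory

/-- The coefficients `β_{k,l,m}` appearing in the product formula for Hermite functions. -/
noncomputable def β (k l m : ℕ) : ℝ :=
  π ^ (-(1 / 4 : ℝ)) *
    Real.sqrt ((Nat.factorial k : ℝ) * (Nat.factorial l : ℝ) *
      (Nat.factorial (k + l - 2 * m) : ℝ)) /
    ((Nat.factorial m : ℝ) * (Nat.factorial (k - m) : ℝ) * (Nat.factorial (l - m) : ℝ))


section aux
open Polynomial

lemma hermiteP_succ (n : ℕ) :
    hermiteP (n+1) = 2 * (X * hermiteP n) - derivative (hermiteP n) := rfl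

lemma deriv_hermiteP (n : ℕ) :
    derivative (hermiteP n) = (2*n) • hermiteP (n-1) := by
  induction n with
  | zero => simp [hermiteP]
  | succ m ih =>
    rw [hermiteP_succ, derivative_sub, derivative_mul, derivative_mul, ih]
    match m with
    | 0 => simp [hermiteP]
    | p+1 =>
      simp only [Nat.add_sub_cancel, derivative_ofNat, derivative_X, derivative_smul,
        zero_mul, one_mul, zero_add, nsmul_eq_mul, derivative_mul, derivative_natCast]
      have hp1 : hermiteP (p+1) = 2 * (X * hermiteP p) - derivative (hermiteP p) := rfl
      push_cast
      linear_combination (-(2:Polynomial ℝ)*(p+1)) * hp1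

lemma two_X_mul (n : ℕ) :
    2 * (X * hermiteP n) = hermiteP (n+1) + (2*n) • hermiteP (n-1) := by
  rw [hermiteP_succ, deriv_hermiteP]; ring

noncomputable def c (k l m : ℕ) : ℕ :=
  2^m * m.factorial * k.choose m * l.choose m

lemma c_zero (k l : ℕ) : c k l 0 = 1 := by simp [c]

lemma c_rec (k j i : ℕ) (hk : j + 2 ≤ k) (hi : i ≤ j + 1) :
    c k (j+2) (i+1) + 2*(j+1) * c k j i
      = c k (j+1) (i+1) + 2*(k+j+1-2*i) * c k (j+1) i := by
  have h1 : k.choose (i+1) * (i+1) = k.choose i * (k - i) :=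
    Nat.choose_succ_right_eq k i
  have h2 : (j+1) * Nat.choose j i = Nat.choose (j+1) (i+1) * (i+1) :=
    Nat.add_one_mul_choose_eq j i
  have h3 : Nat.choose (j+1) (i+1) * (i+1) = Nat.choose (j+1) i * (j+1-i) :=
    Nat.choose_succ_right_eq (j+1) i
  have hp : Nat.choose (j+2) (i+1) = Nat.choose (j+1) i + Nat.choose (j+1) (i+1) :=
    Nat.choose_succ_succ (j+1) i
  have hik : i ≤ k := by omega
  have e1 : k + j + 1 - 2*i = (k - i) + (j+1-i) := by omega
  simp only [c, hp, e1, Nat.factorial_succ, pow_succ]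
  zify [hik, hi] at h1 h2 h3 ⊢
  linear_combination (2 * 2^i * (i.factorial : ℤ) * ((j+1).choose i : ℤ)) * h1
    + (2 * 2^i * (i.factorial : ℤ) * (k.choose i : ℤ)) * h2
    + (2 * 2^i * (i.factorial : ℤ) * (k.choose i : ℤ)) * h3

lemma hermite_mul : ∀ j k : ℕ, j ≤ k →
    hermiteP k * hermiteP j
      = ∑ m ∈ Finset.range (j+1), c k j m • hermiteP (k + j - 2*m) := by
  intro j
  induction j using Nat.strong_induction_on with
  | _ j ih =>
  match j with
  | 0 =>
    intro k _
    simp [c, hermiteP]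
  | 1 =>
    intro k hk
    have h1 : hermiteP 1 = 2 * (X * hermiteP 0) - derivative (hermiteP 0) := rfl
    have h0 : hermiteP 0 = 1 := rfl
    rw [Finset.sum_range_succ, Finset.sum_range_one]
    have e1 : k + 1 - 2*1 = k - 1 := by omega
    have e0 : k + 1 - 2*0 = k + 1 := by omega
    rw [e1, e0, h1, h0]
    simp only [derivative_one, sub_zero, mul_one]
    rw [mul_comm (hermiteP k), mul_assoc, two_X_mul k]
    simp [c]
  | (j+2) =>
    intro k hk
    have ih1 := ih (j+1) (by omega) k (by omega)
    have ih0 := ih j (by omega) k (by omega)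
    have step : hermiteP k * hermiteP (j+2)
        = 2*(X*(hermiteP k * hermiteP (j+1))) - ((2*(j+1)) • (hermiteP k * hermiteP j)) := by
      rw [hermiteP_succ (j+1), deriv_hermiteP (j+1)]
      simp only [Nat.add_sub_cancel, nsmul_eq_mul]
      push_cast
      ring
    rw [step, ih1, ih0]
    have expand : 2*(X*(∑ m ∈ Finset.range (j+1+1),
          c k (j+1) m • hermiteP (k + (j+1) - 2*m)))
        = (∑ m ∈ Finset.range (j+2), c k (j+1) m • hermiteP (k+j+2 - 2*m))
          + (∑ m ∈ Finset.range (j+2),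
              (c k (j+1) m * (2*(k + (j+1) - 2*m))) • hermiteP (k+j - 2*m)) := by
      rw [Finset.mul_sum, Finset.mul_sum, ← Finset.sum_add_distrib]
      refine Finset.sum_congr rfl (fun m hm => ?_)
      have hm' : m ≤ j + 1 := by
        simpa [Nat.lt_succ_iff] using hm
      rw [mul_smul_comm, mul_smul_comm, two_X_mul (k + (j+1) - 2*m), smul_add, smul_smul]
      have eA : k + (j+1) - 2*m + 1 = k + j + 2 - 2*m := by omega
      have eB : k + (j+1) - 2*m - 1 = k + j - 2*m := by omega
      rw [eA, eB]
    rw [expand]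
    have smulsum : (2*(j+1)) • (∑ m ∈ Finset.range (j+1),
          c k j m • hermiteP (k + j - 2*m))
        = ∑ m ∈ Finset.range (j+1), (2*(j+1) * c k j m) • hermiteP (k + j - 2*m) := by
      rw [Finset.smul_sum]
      exact Finset.sum_congr rfl (fun m _ => smul_smul _ _ _)
    rw [smulsum]
    have key : (∑ m ∈ Finset.range (j+2+1), c k (j+2) m • hermiteP (k + (j+2) - 2*m))
          + ∑ m ∈ Finset.range (j+1), (2*(j+1) * c k j m) • hermiteP (k + j - 2*m)
        = (∑ m ∈ Finset.range (j+2), c k (j+1) m • hermiteP (k+j+2 - 2*m))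
          + (∑ m ∈ Finset.range (j+2),
              (c k (j+1) m * (2*(k + (j+1) - 2*m))) • hermiteP (k+j - 2*m)) := by
      -- extend second sum on LHS to range (j+2)
      have ext3 : (∑ m ∈ Finset.range (j+1), (2*(j+1) * c k j m) • hermiteP (k + j - 2*m))
          = ∑ m ∈ Finset.range (j+2), (2*(j+1) * c k j m) • hermiteP (k + j - 2*m) := by
        rw [Finset.sum_range_succ (fun m => (2*(j+1) * c k j m) • hermiteP (k + j - 2*m)) (j+1)]
        have : c k j (j+1) = 0 := by simp [c, Nat.choose_succ_self]
        simp [this]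
      rw [ext3]
      -- split off m = 0 on the two "top-index" sums
      rw [Finset.sum_range_succ' (fun m => c k (j+2) m • hermiteP (k + (j+2) - 2*m)) (j+2),
          Finset.sum_range_succ' (fun m => c k (j+1) m • hermiteP (k+j+2 - 2*m)) (j+1)]
      have h00 : c k (j+2) 0 • hermiteP (k + (j+2) - 2*0)
          = c k (j+1) 0 • hermiteP (k+j+2 - 2*0) := by
        have e : k + (j+2) - 2*0 = k + j + 2 - 2*0 := by omega
        rw [e, c_zero, c_zero]
      rw [h00]
      -- extend the shifted S1 sum to range (j+2)
      have ext1 : (∑ i ∈ Finset.range (j+1), c k (j+1) (i+1) • hermiteP (k+j+2 - 2*(i+1)))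
          = ∑ i ∈ Finset.range (j+2), c k (j+1) (i+1) • hermiteP (k+j+2 - 2*(i+1)) := by
        rw [Finset.sum_range_succ (fun i => c k (j+1) (i+1) • hermiteP (k+j+2 - 2*(i+1))) (j+1)]
        have : c k (j+1) (j+2) = 0 := by simp [c, Nat.choose_succ_self]
        simp [this]
      rw [ext1]
      rw [add_right_comm, add_right_comm (∑ i ∈ Finset.range (j+2),
        c k (j+1) (i+1) • hermiteP (k+j+2 - 2*(i+1)))]
      congr 1
      rw [← Finset.sum_add_distrib, ← Finset.sum_add_distrib]
      refine Finset.sum_congr rfl (fun i hi => ?_)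
      have hi' : i ≤ j + 1 := by simpa [Nat.lt_succ_iff] using hi
      have eT : k + (j+2) - 2*(i+1) = k + j - 2*i := by omega
      have eA : k + j + 2 - 2*(i+1) = k + j - 2*i := by omega
      rw [eT, eA, ← add_smul, ← add_smul]
      congr 1
      have := c_rec k j i hk hi'
      rw [this]
      ring
    rw [sub_eq_iff_eq_add]
    exact key.symm

lemma cM (k l m : ℕ) (hk : m ≤ k) (hl : m ≤ l) :
    c k l m * (m.factorial * (k-m).factorial * (l-m).factorial)
      = 2^m * (k.factorial * l.factorial) := by
  have h1 := Nat.choose_mul_factorial_mul_factorial hk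
  have h2 := Nat.choose_mul_factorial_mul_factorial hl
  rw [c, ← h1, ← h2]
  ring

lemma coeff_eq (k l m : ℕ) (hk : m ≤ k) (hl : m ≤ l) :
    α k * α l * (c k l m : ℝ) = β k l m * α (k + l - 2*m) := by
  set n := k + l - 2*m with hn
  have hkl : n + 2*m = k + l := by omega
  have sqpi : (0:ℝ) < Real.sqrt π := Real.sqrt_pos.mpr pi_pos
  have hA : ∀ j : ℕ, (0:ℝ) < 2^j * j.factorial * Real.sqrt π := fun j => by positivity
  have halpha : ∀ j : ℕ, α j = (Real.sqrt ((2:ℝ)^j * j.factorial * Real.sqrt π))⁻¹ := by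
    intro j
    rw [α, Real.rpow_neg (hA j).le, ← Real.sqrt_eq_rpow]
  have hpi4 : (π:ℝ) ^ (-(1/4:ℝ)) = (Real.sqrt (Real.sqrt π))⁻¹ := by
    rw [Real.rpow_neg pi_pos.le, show (1/4:ℝ) = (1/2)*(1/2) by norm_num,
        Real.rpow_mul pi_pos.le, ← Real.sqrt_eq_rpow, ← Real.sqrt_eq_rpow]
  rw [β, halpha, halpha, halpha, hpi4]
  have hsA : ∀ j : ℕ, Real.sqrt ((2:ℝ)^j * j.factorial * Real.sqrt π) ≠ 0 :=
    fun j => (Real.sqrt_pos.mpr (hA j)).ne'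
  have hM : ((m.factorial : ℝ) * (k-m).factorial * (l-m).factorial) ≠ 0 := by positivity
  have hspi : Real.sqrt (Real.sqrt π) ≠ 0 := (Real.sqrt_pos.mpr sqpi).ne'
  field_simp
  simp only [Real.sqrt_mul', Real.sqrt_nonneg, Nat.cast_nonneg, pow_nonneg, zero_le_two]
  rw [← hn]
  have h1 : Real.sqrt ((2:ℝ)^k) * Real.sqrt ((2:ℝ)^l) = 2^m * Real.sqrt ((2:ℝ)^n) := by
    rw [← Real.sqrt_mul (by positivity : (0:ℝ) ≤ 2^k), ← pow_add]
    have e : (2:ℝ)^(k+l) = ((2:ℝ)^m)^2 * 2^n := by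
      rw [← pow_mul, ← pow_add]; congr 1; omega
    rw [e, Real.sqrt_mul (by positivity), Real.sqrt_sq (by positivity)]
  have h3k : Real.sqrt (k.factorial : ℝ) * Real.sqrt (k.factorial : ℝ) = (k.factorial : ℝ) :=
    Real.mul_self_sqrt (by positivity)
  have h3l : Real.sqrt (l.factorial : ℝ) * Real.sqrt (l.factorial : ℝ) = (l.factorial : ℝ) :=
    Real.mul_self_sqrt (by positivity)
  have hc : (c k l m : ℝ) * ((m.factorial : ℝ) * (k-m).factorial * (l-m).factorial)
      = 2^m * ((k.factorial : ℝ) * l.factorial) := by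
    exact_mod_cast congrArg (Nat.cast : ℕ → ℝ) (cM k l m hk hl)
  linear_combination
      (Real.sqrt (Real.sqrt π) * Real.sqrt (Real.sqrt π) * Real.sqrt ((2:ℝ)^n)
        * Real.sqrt (n.factorial : ℝ)) * hc
    - (Real.sqrt (n.factorial : ℝ) * Real.sqrt (Real.sqrt π) * Real.sqrt (Real.sqrt π)
        * (k.factorial : ℝ) * (l.factorial : ℝ)) * h1
    - (Real.sqrt (n.factorial : ℝ) * Real.sqrt (Real.sqrt π) * Real.sqrt (Real.sqrt π)
        * Real.sqrt ((2:ℝ)^k) * Real.sqrt ((2:ℝ)^l)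
        * Real.sqrt (l.factorial : ℝ) * Real.sqrt (l.factorial : ℝ)) * h3k
    - (Real.sqrt (n.factorial : ℝ) * Real.sqrt (Real.sqrt π) * Real.sqrt (Real.sqrt π)
        * Real.sqrt ((2:ℝ)^k) * Real.sqrt ((2:ℝ)^l) * (k.factorial : ℝ)) * h3l


lemma hermite_mul_full (k l : ℕ) :
    hermiteP k * hermiteP l
      = ∑ m ∈ Finset.range (min k l + 1), c k l m • hermiteP (k + l - 2*m) := by
  rcases le_total l k with hlk | hkl
  · rw [min_eq_right hlk]; exact hermite_mul l k hlk
  · rw [min_eq_left hkl, mul_comm, hermite_mul k l hkl]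
    refine Finset.sum_congr rfl fun m _ => ?_
    rw [show l + k = k + l from by omega, show c l k m = c k l m from by rw [c, c]; ring]

end aux

theorem stmt_4 (k l : ℕ) (x : ℝ) :
    h k x * h l x =
      Real.exp (-x ^ 2 / 2) *
        ∑ m ∈ Finset.range (min k l + 1), β k l m * h (k + l - 2 * m) x := by
  have evalmul : H k x * H l x
      = ∑ m ∈ Finset.range (min k l + 1), (c k l m : ℝ) * H (k + l - 2*m) x := by
    have := congrArg (Polynomial.eval x) (hermite_mul_full k l)
    simpa [H, Polynomial.eval_finset_sum, nsmul_eq_mul] using this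
  calc h k x * h l x
      = (α k * α l) * (H k x * H l x) * (Real.exp (-x^2/2) * Real.exp (-x^2/2)) := by
        simp only [h]; ring
    _ = ∑ m ∈ Finset.range (min k l + 1),
          (α k * α l * (c k l m : ℝ)) *
            (H (k + l - 2*m) x * (Real.exp (-x^2/2) * Real.exp (-x^2/2))) := by
        rw [evalmul, Finset.mul_sum, Finset.sum_mul]
        exact Finset.sum_congr rfl fun m _ => by ring
    _ = Real.exp (-x ^ 2 / 2) *
        ∑ m ∈ Finset.range (min k l + 1), β k l m * h (k + l - 2 * m) x := by
        rw [Finset.mul_sum]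
        refine Finset.sum_congr rfl fun m hm => ?_
        have hmk : m ≤ k := by
          have := Finset.mem_range.mp hm; omega
        have hml : m ≤ l := by
          have := Finset.mem_range.mp hm; omega
        have hco := coeff_eq k l m hmk hml
        simp only [h]
        linear_combination (H (k + l - 2*m) x
          * (Real.exp (-x^2/2) * Real.exp (-x^2/2))) * hco
end

section
/- Multiplication formula for Hermite polynomials: for every nonnegative integer k, nonzero real ρ, and real x, H_k(ρx) = k!·∑_{m=0}^{⌊k/2⌋} ρ^{k−2m}·(ρ²−1)^m/(m!·(k−2m)!)·H_{k−2m}(x) (equivalently ρ^k·(1−1/ρ²)^m in place of ρ^{k−2m}·(ρ²−1)^m). -/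
open Real MeasureTheory

open Polynomial

private lemma hermiteP_deriv : ∀ n : ℕ, Polynomial.derivative (hermiteP n)
    = ((2 * n : ℕ) : ℝ[X]) * hermiteP (n - 1) := by
  intro n
  induction n using Nat.strong_induction_on with
  | _ n ih =>
    match n with
    | 0 => simp [hermiteP]
    | 1 =>
      have e : hermiteP 1 = 2 * (X * hermiteP 0) - Polynomial.derivative (hermiteP 0) := rfl
      have e0 : hermiteP 0 = 1 := rfl
      rw [e, e0]
      simp [derivative_mul]
    | (n+2) =>
      have h1 := ih (n+1) (by omega)
      have h0 := ih n (by omega)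
      rw [Nat.add_sub_cancel] at h1
      have e2 : hermiteP (n+2) = 2 * (X * hermiteP (n+1)) - Polynomial.derivative (hermiteP (n+1)) := rfl
      have e1 : hermiteP (n+1) = 2 * (X * hermiteP n) - Polynomial.derivative (hermiteP n) := rfl
      rw [e2, derivative_sub, h1]
      simp only [derivative_mul, derivative_natCast, derivative_ofNat, derivative_X,
        zero_mul, one_mul, mul_zero, zero_add, add_zero, mul_one]
      rw [h1]
      rw [show n+2-1 = n+1 from rfl]
      rw [e1]
      rw [h0]
      push_cast
      ring

private lemma Hrec (n : ℕ) (y : ℝ) : H (n+1) y = 2 * y * H n y - 2 * n * H (n-1) y := by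
  have e : hermiteP (n+1) = 2 * (X * hermiteP n) - Polynomial.derivative (hermiteP n) := rfl
  unfold H
  rw [e, hermiteP_deriv n]
  push_cast
  simp
  ring

private lemma Hmul (n : ℕ) (x : ℝ) : 2 * x * H n x = H (n+1) x + 2 * n * H (n-1) x := by
  rw [Hrec n x]; ring

private lemma H0 (x : ℝ) : H 0 x = 1 := by
  have e0 : hermiteP 0 = 1 := rfl
  simp [H, e0]

private lemma H1 (x : ℝ) : H 1 x = 2 * x := by
  have := Hrec 0 x
  simp [H0] at this
  simpa [H0] using this

private noncomputable def fF (ρ x : ℝ) (k m : ℕ) : ℝ :=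
  if 2*m ≤ k then
    (Nat.factorial k : ℝ) * (ρ^(k-2*m) * (ρ^2-1)^m /
      ((Nat.factorial m : ℝ) * (Nat.factorial (k-2*m) : ℝ))) * H (k-2*m) x
  else 0

private noncomputable def AA (ρ x : ℝ) (k m : ℕ) : ℝ :=
  if 2*m ≤ k+1 then
    (Nat.factorial (k+1) : ℝ) * ρ * (ρ^(k+1-2*m) * (ρ^2-1)^m /
      ((Nat.factorial m : ℝ) * (Nat.factorial (k+1-2*m) : ℝ))) * H (k+2-2*m) x
  else 0

private noncomputable def BB (ρ x : ℝ) (k m : ℕ) : ℝ :=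
  if 2*m ≤ k+1 then
    (Nat.factorial (k+1) : ℝ) * ρ * (ρ^(k+1-2*m) * (ρ^2-1)^m /
      ((Nat.factorial m : ℝ) * (Nat.factorial (k+1-2*m) : ℝ))) *
      (2 * ((k+1-2*m : ℕ) : ℝ)) * H (k-2*m) x
  else 0

private noncomputable def DD (ρ x : ℝ) (k m : ℕ) : ℝ :=
  if 2*m ≤ k+2 then
    2 * (Nat.factorial (k+1) : ℝ) * m * (ρ^(k+2-2*m) * (ρ^2-1)^m /
      ((Nat.factorial m : ℝ) * (Nat.factorial (k+2-2*m) : ℝ))) * H (k+2-2*m) x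
  else 0

private lemma fact_ne (n : ℕ) : ((Nat.factorial n : ℕ) : ℝ) ≠ 0 :=
  Nat.cast_ne_zero.mpr (Nat.factorial_ne_zero n)

private lemma lemAB (ρ x : ℝ) (k m : ℕ) :
    2 * (ρ*x) * fF ρ x (k+1) m = AA ρ x k m + BB ρ x k m := by
  unfold fF AA BB
  split_ifs with hc
  · have hmul := Hmul (k+1-2*m) x
    rw [show k+1-2*m+1 = k+2-2*m by omega, show k+1-2*m-1 = k-2*m by omega] at hmul
    linear_combination ((Nat.factorial (k+1) : ℝ) * ρ * (ρ^(k+1-2*m) * (ρ^2-1)^m /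
      ((Nat.factorial m : ℝ) * (Nat.factorial (k+1-2*m) : ℝ)))) * hmul
  · ring

private lemma lemBCD (ρ x : ℝ) (k m : ℕ) :
    BB ρ x k m - 2 * ((k:ℝ)+1) * fF ρ x k m = DD ρ x k (m+1) := by
  unfold fF BB DD
  by_cases h2 : 2*m ≤ k
  · rw [if_pos (show 2*m ≤ k+1 by omega), if_pos h2, if_pos (show 2*(m+1) ≤ k+2 by omega)]
    obtain ⟨n, hn⟩ : ∃ n, k = 2*m + n := ⟨k - 2*m, by omega⟩
    subst hn
    rw [show 2*m+n+1-2*m = n+1 by omega, show 2*m+n-2*m = n by omega,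
      show 2*m+n+2-2*(m+1) = n by omega]
    rw [Nat.factorial_succ (2*m+n), Nat.factorial_succ n, Nat.factorial_succ m]
    have f1 := fact_ne m
    have f2 := fact_ne n
    have g1 : ((n:ℝ)+1) ≠ 0 := by positivity
    have g2 : ((m:ℝ)+1) ≠ 0 := by positivity
    push_cast
    field_simp
    ring
  · by_cases h1 : 2*m ≤ k+1
    · rw [if_pos h1, if_neg h2, if_neg (show ¬ 2*(m+1) ≤ k+2 by omega)]
      rw [show k+1-2*m = 0 by omega]
      simp
    · rw [if_neg h1, if_neg h2, if_neg (show ¬ 2*(m+1) ≤ k+2 by omega)]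
      ring

private lemma lemAD (ρ x : ℝ) (k m : ℕ) :
    fF ρ x (k+2) m = AA ρ x k m + DD ρ x k m := by
  unfold fF AA DD
  have hf : ((Nat.factorial (k+2) : ℕ) : ℝ) = ((k:ℝ)+2) * (Nat.factorial (k+1) : ℝ) := by
    rw [show k+2 = (k+1)+1 from rfl, Nat.factorial_succ]
    push_cast
    ring
  by_cases h1 : 2*m ≤ k+1
  · rw [if_pos (show 2*m ≤ k+2 by omega), if_pos h1, if_pos (show 2*m ≤ k+2 by omega)]
    obtain ⟨n, hn⟩ : ∃ n, k+1 = 2*m + n := ⟨k+1-2*m, by omega⟩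
    have hk : ((k:ℝ)+2) = 2*(m:ℝ) + n + 1 := by
      have : ((k:ℝ)) + 1 = 2*(m:ℝ) + n := by exact_mod_cast congrArg (Nat.cast : ℕ → ℝ) hn
      linarith
    rw [show k+2-2*m = n+1 by omega, show k+1-2*m = n by omega]
    rw [hf, hk, Nat.factorial_succ n]
    have f1 := fact_ne m
    have f2 := fact_ne n
    have g1 : ((n:ℝ)+1) ≠ 0 := by positivity
    push_cast
    field_simp
    ring
  · by_cases h0 : 2*m ≤ k+2
    · rw [if_pos h0, if_neg h1, if_pos h0]
      have hk : ((k:ℝ)+2) = 2*(m:ℝ) := by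
        have hm : k+2 = 2*m := by omega
        exact_mod_cast congrArg (Nat.cast : ℕ → ℝ) hm
      rw [hf, hk]
      ring
    · rw [if_neg h0, if_neg h1, if_neg h0]
      ring

private lemma auxA (ρ x : ℝ) : ∀ k : ℕ, H k (ρ*x) = ∑ m ∈ Finset.range (k+1), fF ρ x k m := by
  intro k
  induction k using Nat.strong_induction_on with
  | _ k ih =>
    match k with
    | 0 =>
      rw [H0, Finset.sum_range_one]
      unfold fF
      norm_num [H0]
    | 1 =>
      rw [H1]
      rw [Finset.sum_range_succ, Finset.sum_range_one]
      unfold fF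
      norm_num [H1]
      ring
    | (k+2) =>
      have ih1 := ih (k+1) (by omega)
      have ih0 := ih k (by omega)
      have hr : H (k+2) (ρ*x) = 2*(ρ*x) * H (k+1) (ρ*x) - 2*((k:ℝ)+1) * H k (ρ*x) := by
        have := Hrec (k+1) (ρ*x)
        rw [show k+1-1 = k from rfl] at this
        push_cast at this
        linarith
      rw [hr, ih1, ih0, Finset.mul_sum, Finset.mul_sum]
      have e1 : ∑ m ∈ Finset.range (k+2+1), fF ρ x (k+2) m
          = ∑ m ∈ Finset.range (k+2+1), AA ρ x k m + ∑ m ∈ Finset.range (k+2+1), DD ρ x k m :=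
        (Finset.sum_congr rfl fun m _ => lemAD ρ x k m).trans Finset.sum_add_distrib
      rw [e1]
      have e2 : ∑ m ∈ Finset.range (k+2+1), AA ρ x k m = ∑ m ∈ Finset.range (k+2), AA ρ x k m := by
        rw [Finset.sum_range_succ]
        have : AA ρ x k (k+2) = 0 := by unfold AA; exact if_neg (by omega)
        rw [this, add_zero]
      have e3 : ∑ m ∈ Finset.range (k+2+1), DD ρ x k m
          = ∑ m ∈ Finset.range (k+2), (BB ρ x k m - 2*((k:ℝ)+1) * fF ρ x k m) := by
        rw [Finset.sum_range_succ']
        have hD0 : DD ρ x k 0 = 0 := by unfold DD; simp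
        rw [hD0, add_zero]
        exact Finset.sum_congr rfl fun m _ => (lemBCD ρ x k m).symm
      rw [e2, e3]
      have e4 : ∑ m ∈ Finset.range (k+2), AA ρ x k m
            + ∑ m ∈ Finset.range (k+2), (BB ρ x k m - 2*((k:ℝ)+1) * fF ρ x k m)
          = ∑ m ∈ Finset.range (k+2), (2*(ρ*x) * fF ρ x (k+1) m)
            - ∑ m ∈ Finset.range (k+2), (2*((k:ℝ)+1) * fF ρ x k m) := by
        have hAB : ∑ m ∈ Finset.range (k+2), (AA ρ x k m + BB ρ x k m)
            = ∑ m ∈ Finset.range (k+2), (2*(ρ*x) * fF ρ x (k+1) m) :=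
          Finset.sum_congr rfl fun m _ => (lemAB ρ x k m).symm
        rw [Finset.sum_sub_distrib, ← hAB, Finset.sum_add_distrib]
        ring
      rw [e4]
      have e5 : ∑ m ∈ Finset.range (k+2), (2*((k:ℝ)+1) * fF ρ x k m)
          = ∑ m ∈ Finset.range (k+1), (2*((k:ℝ)+1) * fF ρ x k m) := by
        rw [Finset.sum_range_succ]
        have : fF ρ x k (k+1) = 0 := by unfold fF; exact if_neg (by omega)
        rw [this, mul_zero, add_zero]
      rw [e5]

theorem stmt_6 (k : ℕ) (ρ : ℝ) (hρ : ρ ≠ 0) (x : ℝ) :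
    H k (ρ * x) =
      (Nat.factorial k : ℝ) *
        ∑ m ∈ Finset.range (k / 2 + 1),
          ρ ^ (k - 2 * m) * (ρ ^ 2 - 1) ^ m /
              ((Nat.factorial m : ℝ) * (Nat.factorial (k - 2 * m) : ℝ)) *
            H (k - 2 * m) x := by
  have hsub : Finset.range (k/2+1) ⊆ Finset.range (k+1) :=
    Finset.range_subset_range.mpr (by omega)
  have hz : ∀ m ∈ Finset.range (k+1), m ∉ Finset.range (k/2+1) → fF ρ x k m = 0 := by
    intro m _ hm
    simp only [Finset.mem_range] at hm
    unfold fF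
    exact if_neg (by omega)
  rw [auxA ρ x k, Finset.mul_sum, ← Finset.sum_subset hsub hz]
  refine Finset.sum_congr rfl fun m hm => ?_
  simp only [Finset.mem_range] at hm
  unfold fF
  rw [if_pos (by omega)]
  ring
end
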